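/- Let $\Omega$ be an $n\times n$ symmetric matrix with nonnegative real entries and zero diagonal, and let $Q_i = I + D_i\Omega$. If $M$ is any product of the matrices $Q_1,\dots,Q_n$ in which every $Q_i$ appears at least once, then $M \ge I + \Omega$ entrywise. -/

import Mathlib

section aux

variable {n : ℕ} (Ω : Matrix (Fin n) (Fin n) ℝ)

lemma Qapp (i a b : Fin n) :
    ((1 + Matrix.single i i 1 * Ω : Matrix (Fin n) (Fin n) ℝ)) a b
      = (if a = b then (1:ℝ) else 0) + (if a = i then Ω i b else 0) := by
  rw [Matrix.add_apply, Matrix.one_apply, Matrix.mul_apply]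
  congr 1
  by_cases h : a = i
  · subst h
    simp [Matrix.single]
  · have : ∀ x : Fin n, ¬(i = a ∧ i = x) := fun x hx => h hx.1.symm
    simp [Matrix.single, this, h]

lemma Qnonneg (hnn : ∀ a b, 0 ≤ Ω a b) (i a b : Fin n) :
    0 ≤ ((1 + Matrix.single i i 1 * Ω : Matrix (Fin n) (Fin n) ℝ)) a b := by
  rw [Qapp Ω i a b]
  have := hnn i b
  split <;> split <;> linarith

lemma prod_nonneg (hnn : ∀ a b, 0 ≤ Ω a b) (l : List (Fin n)) (a b : Fin n) :
    0 ≤ ((l.map (fun i => 1 + Matrix.single i i 1 * Ω)).prod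
      : Matrix (Fin n) (Fin n) ℝ) a b := by
  induction l generalizing a b with
  | nil => simp [Matrix.one_apply]; positivity
  | cons i t ih =>
    rw [List.map_cons, List.prod_cons, Matrix.mul_apply]
    exact Finset.sum_nonneg fun k _ => mul_nonneg (Qnonneg Ω hnn i a k) (ih k b)

lemma prod_ge_one (hnn : ∀ a b, 0 ≤ Ω a b) (hdiag : ∀ i, Ω i i = 0)
    (l : List (Fin n)) (a b : Fin n) :
    (1 : Matrix (Fin n) (Fin n) ℝ) a b ≤
      ((l.map (fun i => 1 + Matrix.single i i 1 * Ω)).prod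
        : Matrix (Fin n) (Fin n) ℝ) a b := by
  induction l generalizing a b with
  | nil => simp
  | cons i t ih =>
    rw [List.map_cons, List.prod_cons, Matrix.mul_apply]
    have h1 : ((1 + Matrix.single i i 1 * Ω : Matrix (Fin n) (Fin n) ℝ)) a a = 1 := by
      rw [Qapp]
      by_cases h : a = i
      · subst h; simp [hdiag]
      · simp [h]
    calc (1 : Matrix (Fin n) (Fin n) ℝ) a b
        ≤ ((t.map (fun i => 1 + Matrix.single i i 1 * Ω)).prod
            : Matrix (Fin n) (Fin n) ℝ) a b := ih a b
      _ = ((1 + Matrix.single i i 1 * Ω : Matrix (Fin n) (Fin n) ℝ)) a a *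
            ((t.map (fun i => 1 + Matrix.single i i 1 * Ω)).prod
              : Matrix (Fin n) (Fin n) ℝ) a b := by rw [h1, one_mul]
      _ ≤ _ := Finset.single_le_sum (f := fun k =>
            ((1 + Matrix.single i i 1 * Ω : Matrix (Fin n) (Fin n) ℝ)) a k *
            ((t.map (fun i => 1 + Matrix.single i i 1 * Ω)).prod
              : Matrix (Fin n) (Fin n) ℝ) k b)
            (fun k _ => mul_nonneg (Qnonneg Ω hnn i a k) (prod_nonneg Ω hnn t k b))
            (Finset.mem_univ a)

end aux

theorem stmt5 {n : ℕ} (Ω : Matrix (Fin n) (Fin n) ℝ) (hsymm : Ω.IsSymm)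
    (hnn : ∀ a b, 0 ≤ Ω a b) (hdiag : ∀ i, Ω i i = 0)
    (l : List (Fin n)) (hall : ∀ i : Fin n, i ∈ l) :
    ∀ a b, (1 + Ω) a b ≤
      (((l.map (fun i => 1 + Matrix.single i i 1 * Ω)).prod : Matrix (Fin n) (Fin n) ℝ)) a b := by
  intro a b
  obtain ⟨l1, l2, rfl⟩ := List.append_of_mem (hall a)
  set f : Fin n → Matrix (Fin n) (Fin n) ℝ :=
    fun i => 1 + Matrix.single i i 1 * Ω with hf
  have hsplit : (((l1 ++ a :: l2).map f).prod : Matrix (Fin n) (Fin n) ℝ)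
      = (l1.map f).prod * (f a * (l2.map f).prod) := by
    rw [List.map_append, List.prod_append, List.map_cons, List.prod_cons]
  rw [hsplit]
  have hQab : (1 + Ω) a b = f a a b := by
    show (1 + Ω) a b = ((1 + Matrix.single a a 1 * Ω : Matrix (Fin n) (Fin n) ℝ)) a b
    rw [Qapp Ω a a b, Matrix.add_apply, Matrix.one_apply]
    simp
  -- step 1 : f a a b ≤ (f a * prod l2) a b
  have step1 : f a a b ≤ (f a * (l2.map f).prod) a b := by
    rw [Matrix.mul_apply]
    calc f a a b = f a a b * (1 : Matrix (Fin n) (Fin n) ℝ) b b := by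
            simp [Matrix.one_apply]
      _ ≤ f a a b * ((l2.map f).prod : Matrix (Fin n) (Fin n) ℝ) b b :=
            mul_le_mul_of_nonneg_left (prod_ge_one Ω hnn hdiag l2 b b)
              (Qnonneg Ω hnn a a b)
      _ ≤ _ := Finset.single_le_sum
            (f := fun k => f a a k * ((l2.map f).prod : Matrix (Fin n) (Fin n) ℝ) k b)
            (fun k _ => mul_nonneg (Qnonneg Ω hnn a a k) (prod_nonneg Ω hnn l2 k b))
            (Finset.mem_univ b)
  -- step 2 : (f a * prod l2) a b ≤ (prod l1 * (f a * prod l2)) a b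
  have mid_nonneg : ∀ k, 0 ≤ (f a * (l2.map f).prod) k b := by
    intro k
    rw [Matrix.mul_apply]
    exact Finset.sum_nonneg fun j _ =>
      mul_nonneg (Qnonneg Ω hnn a k j) (prod_nonneg Ω hnn l2 j b)
  have step2 : (f a * (l2.map f).prod) a b
      ≤ ((l1.map f).prod * (f a * (l2.map f).prod)) a b := by
    rw [Matrix.mul_apply]
    calc (f a * (l2.map f).prod) a b
        = (1 : Matrix (Fin n) (Fin n) ℝ) a a * (f a * (l2.map f).prod) a b := by
          simp [Matrix.one_apply]
      _ ≤ ((l1.map f).prod : Matrix (Fin n) (Fin n) ℝ) a a * (f a * (l2.map f).prod) a b :=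
          mul_le_mul_of_nonneg_right (prod_ge_one Ω hnn hdiag l1 a a) (mid_nonneg a)
      _ ≤ _ := Finset.single_le_sum
          (f := fun k => ((l1.map f).prod : Matrix (Fin n) (Fin n) ℝ) a k *
            (f a * (l2.map f).prod) k b)
          (fun k _ => mul_nonneg (prod_nonneg Ω hnn l1 a k) (mid_nonneg k))
          (Finset.mem_univ a)
  rw [hQab]
  exact le_trans step1 step2
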